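/- Let N ≥ 3, let λ₀ ∈ ℝ^N be the first standard basis vector (1,0,…,0) and q₀ ∈ ℝ^N the all-ones vector (1,…,1). Then the N×N matrix 𝓜_N(q₀,λ₀) has rank exactly N − 2. -/

import Mathlib

/-- Dot product on `ℝ^N`. -/
noncomputable def dotProd {N : ℕ} (x y : Fin N → ℝ) : ℝ := ∑ i, x i * y i

/-- The matrix `𝓜_N(q,λ) = [(λ·q)² − ‖q‖²‖λ‖²]·I_N + 𝓝_N(q,λ)`, where
`𝓝_N(q,λ)_{ij} = qᵢ(‖λ‖²q_j − (λ·q)λ_j) + λᵢ(‖q‖²λ_j − (λ·q)q_j)`. -/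
noncomputable def calM {N : ℕ} (q lam : Fin N → ℝ) : Matrix (Fin N) (Fin N) ℝ :=
  Matrix.of fun i j =>
    ((dotProd lam q) ^ 2 - dotProd q q * dotProd lam lam) * (if i = j then 1 else 0)
      + (q i * (dotProd lam lam * q j - dotProd lam q * lam j)
        + lam i * (dotProd q q * lam j - dotProd lam q * q j))

/-- For `N ≥ 3`, `λ₀ = (1,0,…,0)` and `q₀ = (1,…,1)`, the matrix `𝓜_N(q₀,λ₀)`
has rank exactly `N − 2`. -/
theorem rank_calM_at_special_point (N : ℕ) (hN : 3 ≤ N) :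
    (calM (fun _ : Fin N => (1 : ℝ)) (fun i : Fin N => if (i : ℕ) = 0 then 1 else 0)).rank
      = N - 2 := by
  have hNpos : 0 < N := by omega
  haveI : NeZero N := ⟨by omega⟩
  set q : Fin N → ℝ := fun _ => 1 with hq
  set lam : Fin N → ℝ := fun i => if (i : ℕ) = 0 then 1 else 0 with hlam
  set M := calM q lam with hMdef
  have hz : ∀ i : Fin N, (i : ℕ) = 0 ↔ i = 0 := by
    intro i
    constructor
    · intro h; exact Fin.ext (by simpa using h)
    · intro h; simp [h]
  -- basic dot products
  have hsum_lam : (∑ i, lam i) = 1 := by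
    simp only [hlam, hz]
    simp [Finset.sum_ite_eq']
  have hlq : dotProd lam q = 1 := by
    simpa [dotProd, hq] using hsum_lam
  have hqq : dotProd q q = N := by
    simp [dotProd, hq]
  have hll : dotProd lam lam = 1 := by
    have h2 : ∀ i : Fin N, lam i * lam i = lam i := by
      intro i; by_cases h : (i : ℕ) = 0 <;> simp [hlam, h]
    rw [dotProd, Finset.sum_congr rfl fun i _ => h2 i]
    exact hsum_lam
  -- entry formula
  have hM : ∀ i j : Fin N, M i j =
      if (i : ℕ) = 0 then 0 else
        (if i = j then 1 - (N : ℝ) else 0) + (if (j : ℕ) = 0 then 0 else 1) := by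
    intro i j
    have h1 : M i j = (1 - (N : ℝ)) * (if i = j then 1 else 0)
        + ((1 - lam j) + lam i * ((N : ℝ) * lam j - 1)) := by
      simp only [hMdef, calM, Matrix.of_apply, hlq, hqq, hll]
      simp only [hq]
      ring
    rw [h1]
    simp only [hlam]
    simp only [Fin.ext_iff]
    split_ifs <;> first
      | ring1
      | (exfalso; omega)
  -- mulVec formula
  have hmul : ∀ x : Fin N → ℝ, ∀ i : Fin N, M.mulVec x i =
      if (i : ℕ) = 0 then 0 else (1 - (N : ℝ)) * x i + (∑ j, x j) - x 0 := by
    intro x i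
    simp only [Matrix.mulVec, dotProduct]
    by_cases hi : (i : ℕ) = 0
    · simp [hM, hi]
    · simp only [hM, hi, if_false]
      rw [Finset.sum_congr rfl (fun j _ => by
          by_cases h1 : i = j <;> by_cases h2 : (j : ℕ) = 0 <;> simp [h1, h2] <;> ring :
        ∀ j ∈ Finset.univ, ((if i = j then 1 - (N:ℝ) else 0) + (if (j:ℕ) = 0 then 0 else 1)) * x j
          = (if i = j then (1 - (N:ℝ)) * x j else 0) + (x j - (if (j:ℕ) = 0 then x j else 0)))]
      rw [Finset.sum_add_distrib, Finset.sum_ite_eq Finset.univ i (fun j => (1 - (N:ℝ)) * x j),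
        Finset.sum_sub_distrib]
      have h0 : (∑ j : Fin N, if (j : ℕ) = 0 then x j else 0) = x 0 := by
        simp only [hz]
        simp [Finset.sum_ite_eq']
      rw [h0]
      simp
      ring
  -- the two kernel vectors
  set e0 : Fin N → ℝ := fun i => if (i : ℕ) = 0 then 1 else 0 with he0
  set w : Fin N → ℝ := fun i => if (i : ℕ) = 0 then 0 else 1 with hw
  have hsum_e0 : (∑ j, e0 j) = 1 := hsum_lam
  have hsum_w : (∑ j, w j) = (N : ℝ) - 1 := by
    have h3 : (∑ j : Fin N, w j) = ∑ j : Fin N, (1 - e0 j) := by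
      apply Finset.sum_congr rfl; intro j _
      by_cases hj : (j : ℕ) = 0 <;> simp only [hw, he0, hj, if_true, if_false] <;> norm_num
    rw [h3, Finset.sum_sub_distrib, hsum_e0]
    simp
  have he00 : e0 0 = 1 := by simp [he0]
  have hw0 : w 0 = 0 := by simp [hw]
  have hker_e0 : M.mulVec e0 = 0 := by
    funext i
    rw [hmul]
    by_cases hi : (i : ℕ) = 0
    · simp [hi]
    · simp [hi, hsum_e0, he00, he0, mt (hz i).mpr hi]
  have hker_w : M.mulVec w = 0 := by
    funext i
    rw [hmul]
    by_cases hi : (i : ℕ) = 0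
    · simp [hi]
    · have hwi : w i = 1 := by simp [hw, hi, mt (hz i).mpr hi]
      rw [if_neg hi, hsum_w, hwi, hw0]
      simp
  -- kernel equals span {e0, w}
  have hker : LinearMap.ker M.mulVecLin = Submodule.span ℝ {e0, w} := by
    apply le_antisymm
    · intro x hx
      rw [LinearMap.mem_ker, Matrix.mulVecLin_apply] at hx
      set c : ℝ := ((∑ j, x j) - x 0) / ((N : ℝ) - 1) with hc
      have hN1 : (N : ℝ) - 1 ≠ 0 := by
        have : (3 : ℝ) ≤ (N : ℝ) := by exact_mod_cast hN
        linarith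
      have hxi : ∀ i : Fin N, (i : ℕ) ≠ 0 → x i = c := by
        intro i hi
        have heq := congrFun hx i
        rw [hmul, if_neg hi] at heq
        simp only [Pi.zero_apply] at heq
        rw [hc, eq_div_iff hN1]
        linear_combination -heq
      have hxeq : x = x 0 • e0 + c • w := by
        funext i
        by_cases hi : (i : ℕ) = 0
        · have h4 : i = 0 := (hz i).mp hi
          simp [h4, he0, hw]
        · simp [he0, hw, hi, hxi i hi, mt (hz i).mpr hi]
      rw [hxeq]
      exact Submodule.add_mem _
        (Submodule.smul_mem _ _ (Submodule.subset_span (Set.mem_insert _ _)))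
        (Submodule.smul_mem _ _ (Submodule.subset_span (Set.mem_insert_of_mem _ rfl)))
    · rw [Submodule.span_le]
      rintro y hy
      simp only [Set.mem_insert_iff, Set.mem_singleton_iff] at hy
      rcases hy with rfl | rfl
      · rw [SetLike.mem_coe, LinearMap.mem_ker, Matrix.mulVecLin_apply]; exact hker_e0
      · rw [SetLike.mem_coe, LinearMap.mem_ker, Matrix.mulVecLin_apply]; exact hker_w
  -- linear independence of e0, w
  have hli : LinearIndependent ℝ ![e0, w] := by
    rw [LinearIndependent.pair_iff]
    intro s t hst
    have h0 := congrFun hst 0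
    have h1 := congrFun hst (⟨1, by omega⟩ : Fin N)
    simp [he0, hw] at h0 h1
    exact ⟨h0, h1⟩
  have hrange : Set.range ![e0, w] = {e0, w} := by
    ext y
    constructor
    · rintro ⟨i, rfl⟩
      fin_cases i
      · exact Set.mem_insert _ _
      · exact Set.mem_insert_of_mem _ rfl
    · rintro (rfl | rfl)
      exacts [⟨0, rfl⟩, ⟨1, rfl⟩]
  have hfr_ker : Module.finrank ℝ (LinearMap.ker M.mulVecLin) = 2 := by
    rw [hker, ← hrange, finrank_span_eq_card hli]
    simp
  have hrn := LinearMap.finrank_range_add_finrank_ker M.mulVecLin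
  rw [hfr_ker, Module.finrank_pi, Fintype.card_fin] at hrn
  have hrank : M.rank = Module.finrank ℝ (LinearMap.range M.mulVecLin) := rfl
  omega
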